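/- Let R be a commutative ring and B = R[z₁,...,z_u]/(z₁²,...,z_u²), graded by putting each z_i in degree −2. The R-linear map B[2u] → Hom_R(B, R) sending z_S[2u] to the dual basis element (z_{S̄})^∨ of the complement S̄ of S is an isomorphism of modules over the divided power algebra Γ_R(y), where y acts on B by multiplication by z₁+⋯+z_u and acts on Hom_R(B,R) by precomposition. -/

import Mathlib

open Finset

set_option maxHeartbeats 1000000
set_option synthInstance.maxHeartbeats 400000

noncomputable section

/-- `B R u = R[z₁,…,z_u]/(z₁²,…,z_u²)`. -/
abbrev SqZeroAlg (R : Type*) [CommRing R] (u : ℕ) : Type _ :=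
  MvPolynomial (Fin u) R ⧸
    Ideal.span (Set.range fun i : Fin u => (MvPolynomial.X i : MvPolynomial (Fin u) R) ^ 2)

def zvar (R : Type*) [CommRing R] (u : ℕ) (i : Fin u) : SqZeroAlg R u :=
  Ideal.Quotient.mk _ (MvPolynomial.X i)

def zmon (R : Type*) [CommRing R] (u : ℕ) (S : Finset (Fin u)) : SqZeroAlg R u :=
  ∏ i ∈ S, zvar R u i

/-- `y^{[k]} = Σ_{|S|=k} z_S`, through which the divided power algebra `Γ_R(y)`
acts on `B R u`. -/
def ysym (R : Type*) [CommRing R] (u : ℕ) (k : ℕ) : SqZeroAlg R u :=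
  ∑ S ∈ Finset.powersetCard k (Finset.univ : Finset (Fin u)), zmon R u S

namespace SqZeroProof

open MvPolynomial

variable (R : Type*) [CommRing R] (u : ℕ)

/-- The ideal we quotient by. -/
abbrev sqIdeal : Ideal (MvPolynomial (Fin u) R) :=
  Ideal.span (Set.range fun i : Fin u => (MvPolynomial.X i : MvPolynomial (Fin u) R) ^ 2)

variable {R u}

lemma zvar_mul_self (i : Fin u) : zvar R u i * zvar R u i = 0 := by
  have h : (Ideal.Quotient.mk (sqIdeal R u) (MvPolynomial.X i ^ 2)) = 0 :=
    Ideal.Quotient.eq_zero_iff_mem.mpr (Ideal.subset_span ⟨i, rfl⟩)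
  rw [zvar, ← map_mul, ← pow_two]
  exact h

lemma zmon_mul (A B : Finset (Fin u)) :
    zmon R u A * zmon R u B = if Disjoint A B then zmon R u (A ∪ B) else 0 := by
  split_ifs with h
  · rw [zmon, zmon, zmon, ← Finset.prod_union h]
  · obtain ⟨i, hiA, hiB⟩ := Finset.not_disjoint_iff.mp h
    rw [zmon, zmon, ← Finset.mul_prod_erase _ _ hiA, ← Finset.mul_prod_erase _ _ hiB,
      mul_mul_mul_comm, zvar_mul_self, zero_mul]

/-- The square-free exponent vector attached to a finset. -/
def sf (S : Finset (Fin u)) : Fin u →₀ ℕ := ∑ i ∈ S, Finsupp.single i 1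

lemma sf_apply (S : Finset (Fin u)) (j : Fin u) :
    sf S j = if j ∈ S then 1 else 0 := by
  classical
  rw [sf, Finsupp.finset_sum_apply]
  simp [Finsupp.single_apply]

lemma sf_support (S : Finset (Fin u)) : (sf S).support = S := by
  ext j
  simp only [Finsupp.mem_support_iff, sf_apply]
  split_ifs with h <;> simp [h]

lemma sf_le (S : Finset (Fin u)) (j : Fin u) : sf S j ≤ 1 := by
  rw [sf_apply]; split_ifs <;> omega

lemma sf_of_le {a : Fin u →₀ ℕ} (h : ∀ i, a i ≤ 1) : sf a.support = a := by
  ext j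
  rw [sf_apply]
  have hj := h j
  by_cases hmem : j ∈ a.support
  · have := Finsupp.mem_support_iff.mp hmem
    rw [if_pos hmem]; omega
  · have := Finsupp.notMem_support_iff.mp hmem
    rw [if_neg hmem]; omega

lemma mk_smul (r : R) (p : MvPolynomial (Fin u) R) :
    (Ideal.Quotient.mk (sqIdeal R u) (r • p) : SqZeroAlg R u)
      = r • Ideal.Quotient.mk (sqIdeal R u) p := by
  rw [← Ideal.Quotient.mkₐ_eq_mk R (sqIdeal R u)]
  exact map_smul (Ideal.Quotient.mkₐ R (sqIdeal R u)) r p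

lemma zmon_eq (S : Finset (Fin u)) :
    zmon R u S = Ideal.Quotient.mk (sqIdeal R u) (monomial (sf S) 1) := by
  have h1 : (∏ i ∈ S, MvPolynomial.X i : MvPolynomial (Fin u) R) = monomial (sf S) 1 := by
    have h2 := MvPolynomial.prod_X_pow_eq_monomial (s := sf S) (R := R)
    rw [sf_support] at h2
    rw [← h2]
    exact Finset.prod_congr rfl fun i hi => by rw [sf_apply, if_pos hi, pow_one]
  rw [zmon, ← h1, map_prod]
  rfl

open scoped Classical in
/-- The truncation map: kill non-squarefree monomials. -/
def truncF : MvPolynomial (Fin u) R →ₗ[R] (Finset (Fin u) →₀ R) :=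
  (MvPolynomial.basisMonomials (Fin u) R).constr R fun a =>
    if ∀ i, a i ≤ 1 then Finsupp.single a.support 1 else 0

open scoped Classical in
lemma truncF_monomial (a : Fin u →₀ ℕ) (r : R) :
    truncF (monomial a r) =
      r • (if ∀ i, a i ≤ 1 then Finsupp.single a.support 1 else 0) := by
  have h : (monomial a r : MvPolynomial (Fin u) R)
      = r • (MvPolynomial.basisMonomials (Fin u) R a) := by
    rw [coe_basisMonomials]
    simp [MvPolynomial.smul_monomial]
  rw [h, map_smul, truncF, Module.Basis.constr_basis]

lemma truncF_mul_gen (q : MvPolynomial (Fin u) R) (i : Fin u) :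
    truncF (q * MvPolynomial.X i ^ 2) = 0 := by
  classical
  induction q using MvPolynomial.induction_on' with
  | monomial a r =>
    rw [X_pow_eq_monomial, monomial_mul, mul_one, truncF_monomial]
    rw [if_neg, smul_zero]
    intro h
    have := h i
    simp [Finsupp.single_apply] at this
  | add p q hp hq =>
    rw [add_mul, map_add, hp, hq, add_zero]

lemma truncF_ker {p : MvPolynomial (Fin u) R} (hp : p ∈ sqIdeal R u) :
    truncF p = 0 := by
  let K : Ideal (MvPolynomial (Fin u) R) :=
    { carrier := {p | ∀ q, truncF (q * p) = 0}
      add_mem' := fun {a b} ha hb q => by rw [mul_add, map_add, ha, hb, add_zero]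
      zero_mem' := fun q => by rw [mul_zero, map_zero]
      smul_mem' := fun c {x} hx q => by
        rw [smul_eq_mul, ← mul_assoc]; exact hx (q * c) }
  have hK : sqIdeal R u ≤ K := by
    rw [Ideal.span_le]
    rintro x ⟨i, rfl⟩
    exact fun q => truncF_mul_gen q i
  have := hK hp 1
  rwa [one_mul] at this

/-- `truncF` descended to the quotient. -/
def truncQ : SqZeroAlg R u →ₗ[R] (Finset (Fin u) →₀ R) :=
  (Submodule.liftQ ((sqIdeal R u).restrictScalars R) truncF
      (fun p hp => truncF_ker hp)) ∘ₗ
    (Submodule.Quotient.restrictScalarsEquiv R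
        ((sqIdeal R u) : Submodule (MvPolynomial (Fin u) R) (MvPolynomial (Fin u) R))).symm.toLinearMap

lemma truncQ_mk (p : MvPolynomial (Fin u) R) :
    truncQ (Ideal.Quotient.mk (sqIdeal R u) p) = truncF p := by
  rw [truncQ]
  have h : (Ideal.Quotient.mk (sqIdeal R u) p : SqZeroAlg R u)
      = Submodule.Quotient.mk p := rfl
  rw [LinearMap.comp_apply, h]
  rw [LinearEquiv.coe_toLinearMap, Submodule.Quotient.restrictScalarsEquiv_symm_mk]
  exact Submodule.liftQ_apply _ _ _

/-- Linear combination of square-free monomials. -/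
def combQ : (Finset (Fin u) →₀ R) →ₗ[R] SqZeroAlg R u :=
  Finsupp.linearCombination R (zmon R u)

lemma combQ_single (S : Finset (Fin u)) (r : R) :
    combQ (Finsupp.single S r) = r • zmon R u S := by
  rw [combQ, Finsupp.linearCombination_single]

lemma truncQ_comb :
    (truncQ ∘ₗ combQ : (Finset (Fin u) →₀ R) →ₗ[R] (Finset (Fin u) →₀ R)) = LinearMap.id := by
  classical
  refine Finsupp.lhom_ext fun S r => ?_
  simp only [LinearMap.comp_apply, LinearMap.id_apply]
  rw [combQ_single, zmon_eq, ← mk_smul, truncQ_mk]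
  have h : (r • monomial (sf S) 1 : MvPolynomial (Fin u) R) = monomial (sf S) r := by
    simp [MvPolynomial.smul_monomial]
  rw [h, truncF_monomial, if_pos (fun i => sf_le S i), sf_support, Finsupp.smul_single,
    smul_eq_mul, mul_one]

lemma comb_truncQ_aux (p : MvPolynomial (Fin u) R) :
    combQ (truncF p) = Ideal.Quotient.mk (sqIdeal R u) p := by
  classical
  induction p using MvPolynomial.induction_on' with
  | monomial a r =>
    by_cases h : ∀ i, a i ≤ 1
    · rw [truncF_monomial, if_pos h, map_smul, combQ_single, one_smul, zmon_eq, sf_of_le h]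
      have h2 : (monomial a r : MvPolynomial (Fin u) R) = r • monomial a 1 := by
        simp [MvPolynomial.smul_monomial]
      rw [h2, mk_smul]
    · push_neg at h
      obtain ⟨i, hi⟩ := h
      rw [truncF_monomial, if_neg (by push_neg; exact ⟨i, hi⟩), smul_zero, map_zero]
      have hmem : (monomial a r : MvPolynomial (Fin u) R) ∈ sqIdeal R u := by
        have hle : Finsupp.single i 2 ≤ a := Finsupp.single_le_iff.mpr (by omega)
        have : (monomial a r : MvPolynomial (Fin u) R)
            = monomial (a - Finsupp.single i 2) r * MvPolynomial.X i ^ 2 := by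
          rw [X_pow_eq_monomial, monomial_mul, mul_one, tsub_add_cancel_of_le hle]
        rw [this]
        exact Ideal.mul_mem_left _ _ (Ideal.subset_span ⟨i, rfl⟩)
      exact (Ideal.Quotient.eq_zero_iff_mem.mpr hmem).symm
  | add p q hp hq =>
    rw [map_add, map_add, hp, hq, map_add]

lemma comb_truncQ :
    (combQ ∘ₗ truncQ : SqZeroAlg R u →ₗ[R] SqZeroAlg R u) = LinearMap.id := by
  refine LinearMap.ext fun x => ?_
  obtain ⟨p, rfl⟩ := Ideal.Quotient.mk_surjective x
  simp only [LinearMap.comp_apply, LinearMap.id_apply]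
  rw [truncQ_mk, comb_truncQ_aux]

/-- The linear equivalence with the free module on finsets. -/
def reprEquiv : SqZeroAlg R u ≃ₗ[R] (Finset (Fin u) →₀ R) :=
  LinearEquiv.ofLinear truncQ combQ truncQ_comb comb_truncQ

/-- The basis of square-free monomials. -/
def zBasis : Module.Basis (Finset (Fin u)) R (SqZeroAlg R u) := Module.Basis.ofRepr reprEquiv

lemma zBasis_apply (S : Finset (Fin u)) : (zBasis S : SqZeroAlg R u) = zmon R u S := by
  simp only [zBasis, Module.Basis.coe_ofRepr]
  rw [reprEquiv, LinearEquiv.ofLinear_symm_apply, combQ_single, one_smul]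

lemma compl_combo {A S T : Finset (Fin u)} :
    (Disjoint A S ∧ T = (A ∪ S)ᶜ) ↔ (Disjoint A T ∧ A ∪ T = Sᶜ) := by
  classical
  have aux1 : ∀ X Y : Finset (Fin u), Disjoint X (X ∪ Y)ᶜ := fun X Y =>
    Disjoint.mono_left Finset.subset_union_left disjoint_compl_right
  have aux2 : ∀ X Y : Finset (Fin u), Disjoint X Y → X ∪ (X ∪ Y)ᶜ = Yᶜ := by
    intro X Y h
    ext a
    have hd : a ∈ X → a ∉ Y := fun ha => Finset.disjoint_left.mp h ha
    simp only [Finset.mem_union, Finset.mem_compl, Finset.mem_union]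
    tauto
  constructor
  · rintro ⟨h, rfl⟩
    exact ⟨aux1 A S, aux2 A S h⟩
  · rintro ⟨h, hT⟩
    have hS : S = (A ∪ T)ᶜ := by rw [hT, compl_compl]
    subst hS
    exact ⟨aux1 A T, by rw [aux2 A T h, compl_compl]⟩

end SqZeroProof

/-- **Poincaré duality for `B R u`.**  The square-free monomials `z_S` form an `R`-basis
of `B R u`, and the `R`-linear map `B R u → Hom_R(B R u, R)` sending `z_S` to the dual
basis element `(z_{S̄})^∨` of the complementary monomial is an isomorphism of
`Γ_R(y)`-modules, where `y^{[k]}` acts on `B R u` by multiplication by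
`Σ_{|S|=k} z_S` and on the dual by precomposition with that multiplication.
(This realises the graded isomorphism `(B_u^R)^∨ ≅ B_u^R[2u]`.) -/
theorem statement7 (R : Type*) [CommRing R] (u : ℕ) :
    ∃ bB : Module.Basis (Finset (Fin u)) R (SqZeroAlg R u),
      (∀ S : Finset (Fin u), bB S = zmon R u S) ∧
      ∃ e : SqZeroAlg R u ≃ₗ[R] Module.Dual R (SqZeroAlg R u),
        (∀ S : Finset (Fin u), e (zmon R u S) = bB.dualBasis Sᶜ) ∧
        (∀ (k : ℕ) (b x : SqZeroAlg R u),
          e (ysym R u k * b) x = e b (ysym R u k * x)) := by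
  classical
  refine ⟨SqZeroProof.zBasis, SqZeroProof.zBasis_apply, ?_⟩
  set bB : Module.Basis (Finset (Fin u)) R (SqZeroAlg R u) := SqZeroProof.zBasis with hbBdef
  have hbB : ∀ S, bB S = zmon R u S := SqZeroProof.zBasis_apply
  let complEquiv : Finset (Fin u) ≃ Finset (Fin u) :=
    ⟨fun S => Sᶜ, fun S => Sᶜ, fun S => compl_compl S, fun S => compl_compl S⟩
  let e : SqZeroAlg R u ≃ₗ[R] Module.Dual R (SqZeroAlg R u) :=
    bB.equiv bB.dualBasis complEquiv
  have he : ∀ S : Finset (Fin u), e (zmon R u S) = bB.dualBasis Sᶜ := by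
    intro S
    rw [← hbB S]
    exact bB.equiv_apply _ _ _
  refine ⟨e, he, ?_⟩
  have eval : ∀ W T : Finset (Fin u),
      e (zmon R u W) (zmon R u T) = if T = Wᶜ then (1 : R) else 0 := by
    intro W T
    rw [he W, ← hbB T, Module.Basis.dualBasis_apply_self]
  have hterm : ∀ A S T : Finset (Fin u),
      e (zmon R u A * zmon R u S) (zmon R u T)
        = e (zmon R u S) (zmon R u A * zmon R u T) := by
    intro A S T
    have hL : e (zmon R u A * zmon R u S) (zmon R u T)
        = if Disjoint A S ∧ T = (A ∪ S)ᶜ then (1 : R) else 0 := by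
      rw [SqZeroProof.zmon_mul]
      by_cases h1 : Disjoint A S
      · rw [if_pos h1, eval]
        simp [h1]
      · rw [if_neg h1]
        simp [h1]
    have hR : e (zmon R u S) (zmon R u A * zmon R u T)
        = if Disjoint A T ∧ A ∪ T = Sᶜ then (1 : R) else 0 := by
      rw [SqZeroProof.zmon_mul]
      by_cases h2 : Disjoint A T
      · rw [if_pos h2, eval]
        simp [h2]
      · rw [if_neg h2]
        simp [h2]
    rw [hL, hR, if_congr SqZeroProof.compl_combo rfl rfl]
  have key : ∀ (k : ℕ) (S T : Finset (Fin u)),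
      e (ysym R u k * zmon R u S) (zmon R u T)
        = e (zmon R u S) (ysym R u k * zmon R u T) := by
    intro k S T
    rw [ysym, Finset.sum_mul, map_sum, LinearMap.sum_apply, Finset.sum_mul, map_sum]
    exact Finset.sum_congr rfl fun A _ => hterm A S T
  intro k b x
  have h1 : (e.toLinearMap ∘ₗ LinearMap.mulLeft R (ysym R u k))
      = (LinearMap.mulLeft R (ysym R u k)).dualMap ∘ₗ e.toLinearMap := by
    refine bB.ext fun S => bB.ext fun T => ?_
    simp only [LinearMap.comp_apply, LinearMap.mulLeft_apply, LinearMap.dualMap_apply,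
      LinearEquiv.coe_toLinearMap, hbB]
    exact key k S T
  have h2 := LinearMap.congr_fun h1 b
  simp only [LinearMap.comp_apply, LinearMap.mulLeft_apply, LinearEquiv.coe_toLinearMap] at h2
  have h3 := LinearMap.congr_fun h2 x
  simpa using h3

end
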